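/- In the total complex of the $n$-fold Loday complex $\mathcal{L}^{\mathbb{Q}}_{T^n}(\mathbb{Q}[t];\mathbb{Q})$, if $\mathbf{v}$ and $\mathbf{w}$ are coordinates of multidegree $\mathbf{1}_n$ that are both $0$ in the $i$-th place for some $i$, then the cycle $x_{\mathbf{v}} \cdot y_{\mathbf{w}}$ is null-homologous. In particular $x_{\mathbf{v}} \sim 0$ whenever $\mathbf{v} \neq \mathbf{1}_n$. -/

import Mathlib

/-!
The multisimplicial Loday complex `𝓛^ℚ_{Tⁿ}(ℚ[t]; ℚ)` of the `n`-torus with reduced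
coefficients, in the multidegrees needed for the moving lemmas.

A chain in multidegree `𝟏ₙ + eᵢ`-or-lower is a `ℚ`-linear combination of monomial
multi-matrices with entries powers of `t` (entry `ℚ` at the basepoint coordinate `𝟎ₙ`);
such a monomial is recorded by its exponent multi-matrix, a finitely supported function
`e : (Fin n → ℕ) → ℕ` (the exponent of `t` at each coordinate) with `e 𝟎 = 0`.  Chains
form the monoid algebra `Ch n` of these exponent matrices (multiplication of monomials
adds exponents coordinatewise, matching multiplication of multi-matrices).  `elem v x` is
the multi-matrix `x_𝐯` with `x ∈ ℚ[t]` at coordinate `𝐯` and `1` elsewhere (so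
`elem 𝟎 t = 0`: `t` acts as `0` on the coefficient copy of `ℚ`).  `D i j` is the `j`-th
face map of the simplicial circle in the `i`-th direction (for circle-degree `2 → 1`),
`del i = D i 0 - D i 1 + D i 2` the corresponding differential, `Deg b` the chains of
multidegree (entrywise) at most `b`, and `Homologous x y` says the difference `x - y` is
a boundary coming from total multidegree `n + 1`, i.e. from the multidegrees `𝟏ₙ + eᵢ`
(in the directions `i'` with multidegree `1` the cyclic differentials vanish).
-/

/-- Coordinates of a multi-matrix. -/
abbrev Coord (n : ℕ) := Fin n → ℕ

/-- Exponent multi-matrices: the exponent at the basepoint coordinate `𝟎` is `0`. -/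
noncomputable def ExpM (n : ℕ) : AddSubmonoid ((Coord n) →₀ ℕ) where
  carrier := {e | e 0 = 0}
  add_mem' := by intro a b ha hb; simp_all
  zero_mem' := by simp

/-- Chains of the (reduced-coefficient) multisimplicial Loday complex of `ℚ[t]`. -/
abbrev Ch (n : ℕ) := AddMonoidAlgebra ℚ (ExpM n)

/-- The monomial with a single `t` at coordinate `v` (zero if `v` is the basepoint,
since `t` acts as `0` on the coefficients `ℚ`). -/
noncomputable def tv {n : ℕ} (v : Coord n) : Ch n :=
  if h : v = 0 then 0
  else AddMonoidAlgebra.single ⟨Finsupp.single v 1, Finsupp.single_eq_of_ne (Ne.symm h)⟩ 1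

/-- `elem v x = x_𝐯`: the multi-matrix with `x ∈ ℚ[t]` at coordinate `v`, `1` elsewhere. -/
noncomputable def elem {n : ℕ} (v : Coord n) (x : Polynomial ℚ) : Ch n :=
  Polynomial.aeval (tv v) x

/-- The `j`-th face map of the simplicial circle `S¹` from simplicial degree `2` to
degree `1`, on coordinates `{0,1,2} → {0,1}` (`0` the basepoint). -/
def cface (j c : ℕ) : ℕ := (if 3 ≤ j + c then c - 1 else c) % 2

/-- The `j`-th face in direction `i` on coordinates. -/
def phi {n : ℕ} (i : Fin n) (j : ℕ) (c : Coord n) : Coord n :=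
  Function.update c i (cface j (c i))

/-- Face of a monomial: push exponents forward along `phi i j` (adding exponents that
land at the same coordinate = multiplying the entries over each fiber); if a positive
exponent lands on the basepoint the result is `0` (reduced coefficients). -/
noncomputable def Dsingle {n : ℕ} (i : Fin n) (j : ℕ) (e : ExpM n) : Ch n :=
  if h : (Finsupp.mapDomain (phi i j) (e : Coord n →₀ ℕ)) 0 = 0 then
    AddMonoidAlgebra.single ⟨Finsupp.mapDomain (phi i j) (e : Coord n →₀ ℕ), h⟩ 1
  else 0

/-- The `j`-th face map in direction `i`, extended linearly to chains. -/
noncomputable def D {n : ℕ} (i : Fin n) (j : ℕ) (a : Ch n) : Ch n :=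
  Finsupp.sum a.coeff fun e q => q • Dsingle i j e

/-- The simplicial differential in direction `i` (from multidegree `𝟏ₙ + eᵢ`). -/
noncomputable def del {n : ℕ} (i : Fin n) (a : Ch n) : Ch n :=
  D i 0 a - D i 1 a + D i 2 a

/-- The monomial `e` lies in the box of multidegree `b`. -/
def inBox {n : ℕ} (b : Coord n) (e : ExpM n) : Prop :=
  ∀ c ∈ (e : Coord n →₀ ℕ).support, ∀ i, c i ≤ b i

/-- Chains of multidegree (entrywise at most) `b`. -/
noncomputable def Deg {n : ℕ} (b : Coord n) : Submodule ℚ (Ch n) :=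
  Submodule.span ℚ {x | ∃ e : ExpM n, inBox b e ∧ x = AddMonoidAlgebra.single e 1}

/-- Boundaries in multidegree `𝟏ₙ`: images of the total differential on chains of the
multidegrees `𝟏ₙ + eᵢ` (in directions of multidegree `1` the cyclic differentials
vanish, so the total differential is `± del i` there). -/
noncomputable def bdry (n : ℕ) : Submodule ℚ (Ch n) :=
  Submodule.span ℚ {x | ∃ (i : Fin n) (z : Ch n),
    z ∈ Deg (Function.update (fun _ => 1) i 2) ∧ x = del i z}

/-- Two chains of multidegree `𝟏ₙ` are homologous if their difference is a boundary. -/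
def Homologous {n : ℕ} (x y : Ch n) : Prop := x - y ∈ bdry n

/-!
STATEMENT 13: in the total complex of `𝓛^ℚ_{Tⁿ}(ℚ[t]; ℚ)`, if `𝐯, 𝐰 ∈ {0,1}ⁿ` are
coordinates of multidegree `𝟏ₙ` that are both `0` in the `i`-th place, then the cycle
`x_𝐯 · y_𝐰` is null-homologous.  In particular `x_𝐯 ∼ 0` whenever `𝐯 ≠ 𝟏ₙ`.
-/


/-! ### Auxiliary machinery for the proof -/

open Finsupp in
/-- Chains all of whose monomials have support coordinates vanishing at `i`
and bounded by `1` everywhere: a subalgebra of `Ch n`. -/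
noncomputable def GoodS {n : ℕ} (i : Fin n) : Subalgebra ℚ (Ch n) where
  carrier := {z | ∀ e ∈ z.coeff.support, ∀ c ∈ (e : Coord n →₀ ℕ).support,
    c i = 0 ∧ ∀ j, c j ≤ 1}
  mul_mem' := by
    classical
    intro a b ha hb e he c hc
    obtain ⟨p, hp, q, hq, rfl⟩ := Finset.mem_add.mp (AddMonoidAlgebra.support_coeff_mul_subset a b he)
    have : ((p + q : ExpM n) : Coord n →₀ ℕ) = (p : Coord n →₀ ℕ) + q := rfl
    rw [this] at hc
    rcases Finset.mem_union.mp (Finsupp.support_add hc) with h | h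
    · exact ha p hp c h
    · exact hb q hq c h
  add_mem' := by
    intro a b ha hb e he c hc
    rcases Finset.mem_union.mp (Finsupp.support_add he) with h | h
    · exact ha e h c hc
    · exact hb e h c hc
  algebraMap_mem' := by
    intro r e he c hc
    have he' : e = 0 := by
      have := Finsupp.support_single_subset (by simpa using he)
      simpa using this
    subst he'
    simp at hc

lemma mem_GoodS {n : ℕ} {i : Fin n} {z : Ch n} :
    z ∈ GoodS i ↔ ∀ e ∈ z.coeff.support, ∀ c ∈ (e : Coord n →₀ ℕ).support,
      c i = 0 ∧ ∀ j, c j ≤ 1 := Iff.rfl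

lemma tv_mem_GoodS {n : ℕ} {i : Fin n} {v : Coord n} (hvi : v i = 0)
    (hv : ∀ j, v j ≤ 1) : tv v ∈ GoodS i := by
  rw [tv]
  split_ifs with h
  · exact zero_mem _
  · rw [mem_GoodS]
    intro e he c hc
    have he' := Finset.mem_singleton.mp (Finsupp.support_single_subset he)
    subst he'
    have hc' := Finset.mem_singleton.mp (Finsupp.support_single_subset hc)
    subst hc'
    exact ⟨hvi, hv⟩

lemma elem_mem_GoodS {n : ℕ} {i : Fin n} {v : Coord n} (hvi : v i = 0)
    (hv : ∀ j, v j ≤ 1) (x : Polynomial ℚ) : elem v x ∈ GoodS i := by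
  have hle : Algebra.adjoin ℚ {tv v} ≤ GoodS i :=
    Algebra.adjoin_le (by simpa using tv_mem_GoodS hvi hv)
  rw [elem]
  exact hle (Polynomial.aeval_mem_adjoin_singleton ℚ (p := x) (x := tv v))

lemma cface_zero (j : ℕ) : cface j 0 = 0 := by
  unfold cface
  split_ifs <;> simp

lemma D_eq_self {n : ℕ} (i : Fin n) (j : ℕ) (z : Ch n) (hz : z ∈ GoodS i) :
    D i j z = z := by
  rw [D]
  conv_rhs => rw [← AddMonoidAlgebra.sum_coeff_single z]
  refine Finsupp.sum_congr fun e he => ?_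
  have hmap : Finsupp.mapDomain (phi i j) (e : Coord n →₀ ℕ) = e := by
    have hcongr : ∀ c ∈ (e : Coord n →₀ ℕ).support, phi i j c = id c := by
      intro c hc
      have hci := (hz e he c hc).1
      simp [phi, hci, cface_zero, Function.update_eq_self]
    rw [Finsupp.mapDomain_congr hcongr, Finsupp.mapDomain_id]
  have h0 : (Finsupp.mapDomain (phi i j) (e : Coord n →₀ ℕ)) 0 = 0 := by
    rw [hmap]; exact e.2
  rw [Dsingle, dif_pos h0]
  have hsub : (⟨Finsupp.mapDomain (phi i j) (e : Coord n →₀ ℕ), h0⟩ : ExpM n) = e :=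
    Subtype.ext hmap
  rw [hsub, AddMonoidAlgebra.smul_single', mul_one]

lemma mem_Deg_of_GoodS {n : ℕ} (i : Fin n) (z : Ch n) (hz : z ∈ GoodS i) :
    z ∈ Deg (Function.update (fun _ => 1) i 2) := by
  rw [← AddMonoidAlgebra.sum_coeff_single z, Finsupp.sum]
  refine Submodule.sum_mem _ fun e he => ?_
  have : (AddMonoidAlgebra.single e (z.coeff e) : Ch n) = z.coeff e • AddMonoidAlgebra.single e (1 : ℚ) := by
    rw [AddMonoidAlgebra.smul_single', mul_one]
  rw [this]
  refine Submodule.smul_mem _ _ (Submodule.subset_span ?_)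
  refine ⟨e, ?_, rfl⟩
  intro c hc j
  obtain ⟨hci, hcb⟩ := hz e he c hc
  by_cases hji : j = i
  · subst hji; simp [hci]
  · simp [Function.update_of_ne hji]; exact hcb j

lemma good_mem_bdry {n : ℕ} (i : Fin n) (z : Ch n) (hz : z ∈ GoodS i) :
    z ∈ bdry n := by
  refine Submodule.subset_span ⟨i, z, mem_Deg_of_GoodS i z hz, ?_⟩
  rw [del, D_eq_self i 0 z hz, D_eq_self i 1 z hz, D_eq_self i 2 z hz]
  abel


theorem vanishing_off_diagonal (n : ℕ) (v w : Coord n)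
    (hv : ∀ j, v j ≤ 1) (hw : ∀ j, w j ≤ 1)
    (i : Fin n) (hvi : v i = 0) (hwi : w i = 0) (x y : Polynomial ℚ) :
    Homologous (elem v x * elem w y) 0 ∧
    ∀ u : Coord n, (∀ j, u j ≤ 1) → u ≠ (fun _ => 1) →
      ∀ x' : Polynomial ℚ, Homologous (elem u x') 0 := by
  constructor
  · have hm : elem v x * elem w y ∈ GoodS i :=
      mul_mem (elem_mem_GoodS hvi hv x) (elem_mem_GoodS hwi hw y)
    show _ - 0 ∈ bdry n
    rw [sub_zero]
    exact good_mem_bdry i _ hm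
  · intro u hu hne x'
    have hk : ∃ k, u k = 0 := by
      by_contra h
      push_neg at h
      exact hne (funext fun k => by have h1 := hu k; have h2 := h k; omega)
    obtain ⟨k, hk⟩ := hk
    show _ - 0 ∈ bdry n
    rw [sub_zero]
    exact good_mem_bdry k _ (elem_mem_GoodS hk hu x')
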